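/- Let γ > 0 and let s : ℝ → (0,1] be a differentiable function with s(t) = exp(−R₀·∫₀^∞ (1 − s(t−u))·γ·e^{−γu} du) for all t, where R₀ > 0, and where s is bounded and s(−∞) = 1. Define i(t) = 1 − s(t) − ∫_{−∞}^t (1−s(v))·γ·e^{−γ(t−v)} dv and r(t) = ∫_{−∞}^t (1−s(v))·γ·e^{−γ(t−v)} dv. Then s, i, r satisfy the Kermack–McKendrick equations: s'(t) = −γR₀·i(t)·s(t), i'(t) = γR₀·i(t)·s(t) − γ·i(t), and r'(t) = γ·i(t). -/

import Mathlib

open Real Filter Topology MeasureTheory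

private lemma sir_cov (f : ℝ → ℝ) (t : ℝ) :
    (∫ u in Set.Ioi (0:ℝ), f (t - u)) = ∫ v in Set.Iic t, f v := by
  rw [setIntegral_congr_set Ioi_ae_eq_Ici, ← integral_indicator measurableSet_Ici,
    ← integral_indicator measurableSet_Iic,
    ← integral_sub_left_eq_self (fun x => (Set.Iic t).indicator f x) volume t]
  congr 1
  ext x
  by_cases h : (0:ℝ) ≤ x
  · rw [Set.indicator_of_mem (Set.mem_Ici.2 h),
      Set.indicator_of_mem (by simp [Set.mem_Iic]; linarith)]
  · rw [Set.indicator_of_notMem (by simpa using h),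
      Set.indicator_of_notMem (by simp [Set.mem_Iic]; linarith)]

private lemma sir_intExp {γ : ℝ} (hγ : 0 < γ) (a : ℝ) :
    IntegrableOn (fun v => γ * Real.exp (γ * v)) (Set.Iic a) := by
  have h1 : Integrable ((Set.Iic (γ * a)).indicator Real.exp) :=
    (integrable_indicator_iff measurableSet_Iic).2 (integrableOn_exp_Iic (γ * a))
  have h2 := h1.comp_mul_left' hγ.ne'
  have h3 : (fun x => (Set.Iic (γ * a)).indicator Real.exp (γ * x))
      = (Set.Iic a).indicator (fun v => Real.exp (γ * v)) := by
    ext x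
    by_cases h : x ≤ a
    · rw [Set.indicator_of_mem (Set.mem_Iic.2 (mul_le_mul_of_nonneg_left h hγ.le)),
        Set.indicator_of_mem (Set.mem_Iic.2 h)]
    · rw [Set.indicator_of_notMem
        (by simp only [Set.mem_Iic, not_le]; exact (mul_lt_mul_iff_right₀ hγ).2 (lt_of_not_ge h)),
        Set.indicator_of_notMem (by simpa using h)]
  rw [h3] at h2
  have h4 : IntegrableOn (fun v => Real.exp (γ * v)) (Set.Iic a) :=
    (integrable_indicator_iff measurableSet_Iic).1 h2
  exact h4.const_mul γ

/-- The limiting susceptible, infected and recovered curves of the single-type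
Markovian SIR epidemic satisfy the Kermack–McKendrick ODEs. -/
theorem stmt7 (γ R₀ : ℝ) (hγ : 0 < γ) (hR : 0 < R₀)
    (s i r : ℝ → ℝ)
    (hs : Differentiable ℝ s)
    (hrange : ∀ t, 0 < s t ∧ s t ≤ 1)
    (heq : ∀ t, s t = Real.exp (-R₀ * ∫ u in Set.Ioi (0:ℝ),
        (1 - s (t - u)) * (γ * Real.exp (-γ * u))))
    (hlim : Tendsto s atBot (𝓝 1))
    (hi : ∀ t, i t = 1 - s t - ∫ v in Set.Iic t, (1 - s v) * (γ * Real.exp (-γ * (t - v))))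
    (hr : ∀ t, r t = ∫ v in Set.Iic t, (1 - s v) * (γ * Real.exp (-γ * (t - v)))) :
    ∀ t, HasDerivAt s (-(γ * R₀) * i t * s t) t ∧
      HasDerivAt i (γ * R₀ * i t * s t - γ * i t) t ∧
      HasDerivAt r (γ * i t) t := by
  set h : ℝ → ℝ := fun v => (1 - s v) * (γ * Real.exp (γ * v)) with hh
  have hcont : Continuous h := by
    apply Continuous.mul
    · exact continuous_const.sub hs.continuous
    · exact continuous_const.mul (Real.continuous_exp.comp (continuous_const.mul continuous_id))
  have hIntH : ∀ a : ℝ, IntegrableOn h (Set.Iic a) := by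
    intro a
    apply (sir_intExp hγ a).mono' (hcont.aestronglyMeasurable.restrict)
    filter_upwards with v
    have h1 := (hrange v).1
    have h2 := (hrange v).2
    have h3 : (0:ℝ) < Real.exp (γ * v) := Real.exp_pos _
    rw [Real.norm_eq_abs, abs_mul, abs_of_nonneg (by positivity : (0:ℝ) ≤ γ * Real.exp (γ * v)),
      abs_of_nonneg (by linarith : (0:ℝ) ≤ 1 - s v)]
    nlinarith [mul_pos hγ h3]
  -- derivative of the cumulative integral
  have hG : ∀ a : ℝ, HasDerivAt (fun x => ∫ v in Set.Iic x, h v) (h a) a := by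
    intro a
    have key : ∀ x, (∫ v in Set.Iic x, h v)
        = (∫ v in Set.Iic 0, h v) + ∫ v in (0:ℝ)..x, h v := by
      intro x
      have := intervalIntegral.integral_Iic_sub_Iic (hIntH 0) (hIntH x)
      linarith
    have hii : IntervalIntegrable h volume 0 a := by
      apply IntegrableOn.intervalIntegrable
      apply (hIntH (max 0 a)).mono_set
      intro x hx
      rcases Set.mem_uIcc.1 hx with ⟨_, h2⟩ | ⟨_, h2⟩
      · exact h2.trans (le_max_right 0 a)
      · exact h2.trans (le_max_left 0 a)
    have hd : HasDerivAt (fun x => (∫ v in Set.Iic 0, h v) + ∫ v in (0:ℝ)..x, h v) (h a) a :=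
      (intervalIntegral.integral_hasDerivAt_right hii
        (hcont.stronglyMeasurableAtFilter volume (𝓝 a)) hcont.continuousAt).const_add _
    exact hd.congr_of_eventuallyEq (Filter.Eventually.of_forall key)
  -- rewrite r
  have hrw : ∀ x, r x = Real.exp (-γ * x) * ∫ v in Set.Iic x, h v := by
    intro x
    rw [hr x, ← integral_const_mul]
    apply setIntegral_congr_fun measurableSet_Iic
    intro v _
    show (1 - s v) * (γ * Real.exp (-γ * (x - v))) = Real.exp (-γ * x) * h v
    rw [hh]
    have : Real.exp (-γ * (x - v)) = Real.exp (-γ * x) * Real.exp (γ * v) := by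
      rw [← Real.exp_add]; ring_nf
    rw [this]; ring
  have hit : ∀ x, i x = 1 - s x - r x := fun x => by rw [hi x, hr x]
  -- derivative of r
  have hrd : ∀ a, HasDerivAt r (γ * i a) a := by
    intro a
    have h1 : HasDerivAt (fun x => Real.exp (-γ * x) * ∫ v in Set.Iic x, h v)
        (Real.exp (-γ * a) * (-γ) * (∫ v in Set.Iic a, h v) + Real.exp (-γ * a) * h a) a := by
      have he : HasDerivAt (fun x => Real.exp (-γ * x)) (Real.exp (-γ * a) * (-γ)) a := by
        convert ((hasDerivAt_id a).const_mul (-γ)).exp using 1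
        all_goals simp
      exact he.mul (hG a)
    have h2 := h1.congr_of_eventuallyEq (Filter.Eventually.of_forall hrw)
    refine h2.congr_deriv ?_
    have ha := hrw a
    have h3 : Real.exp (-γ * a) * h a = γ * (1 - s a) := by
      rw [hh]
      show Real.exp (-γ * a) * ((1 - s a) * (γ * Real.exp (γ * a))) = γ * (1 - s a)
      have e1 : Real.exp (-γ * a) * Real.exp (γ * a) = 1 := by
        rw [← Real.exp_add]; simp
      linear_combination (1 - s a) * γ * e1
    rw [hit a, h3]
    rw [show Real.exp (-γ * a) * (-γ) * (∫ v in Set.Iic a, h v)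
        = -γ * (Real.exp (-γ * a) * ∫ v in Set.Iic a, h v) by ring, ← ha]
    ring
  -- rewrite s
  have hsrw : ∀ x, s x = Real.exp (-R₀ * r x) := by
    intro x
    rw [heq x, hr x]
    congr 2
    have := sir_cov (fun v => (1 - s v) * (γ * Real.exp (-γ * (x - v)))) x
    rw [← this]
    apply setIntegral_congr_fun measurableSet_Ioi
    intro u _
    simp [sub_sub_cancel]
  -- derivative of s
  have hsd : ∀ a, HasDerivAt s (-(γ * R₀) * i a * s a) a := by
    intro a
    have h1 : HasDerivAt (fun x => Real.exp (-R₀ * r x))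
        (Real.exp (-R₀ * r a) * (-R₀ * (γ * i a))) a :=
      ((hrd a).const_mul (-R₀)).exp
    have h2 := h1.congr_of_eventuallyEq (Filter.Eventually.of_forall hsrw)
    refine h2.congr_deriv ?_
    rw [hsrw a]
    ring
  intro t
  refine ⟨hsd t, ?_, hrd t⟩
  have h1 : HasDerivAt (fun x => 1 - s x - r x)
      (-( -(γ * R₀) * i t * s t) - γ * i t) t :=
    (((hasDerivAt_const t (1:ℝ)).sub (hsd t)).sub (hrd t)).congr_deriv (by ring)
  have h2 := h1.congr_of_eventuallyEq (Filter.Eventually.of_forall hit)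
  refine h2.congr_deriv ?_
  ring
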